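/- Fix p ∈ (0,1], a positive integer n, and σ ∈ S_n. Let T_{S_n}(σ) be the number of steps for the Ungarian Markov chain with parameter p on S_n (right weak order) started at σ to reach the identity permutation. Then for every integer z > n²/p, P(T_{S_n}(σ) ≥ z) ≤ exp(−zp/8). -/

import Mathlib

open scoped Classical ENNReal

noncomputable section

namespace Ungarian

variable {L : Type*} [Fintype L]

/-- `y` is covered by `x` with respect to the order relation `le`. -/
def CovRel (le : L → L → Prop) (x y : L) : Prop :=
  le y x ∧ y ≠ x ∧ ∀ z, le y z → le z x → z = y ∨ z = x

/-- The finset of elements covered by `x`. -/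
def covFinset (le : L → L → Prop) (x : L) : Finset L :=
  Finset.univ.filter fun y => CovRel le x y

/-- `m` is a greatest lower bound of `S` with respect to `le`. -/
def IsMeetOf (le : L → L → Prop) (S : Set L) (m : L) : Prop :=
  (∀ s ∈ S, le m s) ∧ ∀ z, (∀ s ∈ S, le z s) → le z m

/-- The meet of `{x} ∪ T`. -/
def meetOf (le : L → L → Prop) (x : L) (T : Finset L) : L :=
  if h : ∃ m, IsMeetOf le (insert x (T : Set L)) m then h.choose else x

/-- One-step transition probabilities of the Ungarian Markov chain with parameter `p`:
from `x`, a random subset `T` of the set of elements covered by `x` is chosen, each element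
independently with probability `p`, and the chain moves to the meet of `{x} ∪ T`. -/
def stepProb (p : ℝ) (le : L → L → Prop) (x y : L) : ℝ≥0∞ :=
  ∑ T ∈ (covFinset le x).powerset,
    if meetOf le x T = y then
      ENNReal.ofReal (p ^ T.card * (1 - p) ^ ((covFinset le x).card - T.card))
    else 0

/-- Distribution after `t` steps started from `x`. -/
def walk (p : ℝ) (le : L → L → Prop) (x : L) : ℕ → L → ℝ≥0∞
  | 0 => fun y => if y = x then 1 else 0
  | t + 1 => fun y => ∑ z : L, walk p le x t z * stepProb p le z y

/-- Probability that the chain started at `x` lies in `S` after `t` steps. -/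
def probIn (p : ℝ) (le : L → L → Prop) (x : L) (t : ℕ) (S : Set L) : ℝ≥0∞ :=
  ∑ y ∈ Finset.univ.filter (· ∈ S), walk p le x t y

/-- Expected number of steps until absorption at `bot`, computed as `∑_t P(X_t ≠ bot)`. -/
def expAbsorb (p : ℝ) (le : L → L → Prop) (x bot : L) : ℝ≥0∞ :=
  ∑' t : ℕ, probIn p le x t {y | y ≠ bot}

end Ungarian

/-- `τ` is covered by `σ` in the right weak order on `S_n`:
`τ = σ ∘ (i i+1)` for a descent `i` of `σ`. -/
def wCov {n : ℕ} (σ τ : Equiv.Perm (Fin n)) : Prop :=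
  ∃ i : ℕ, ∃ h : i + 1 < n,
    σ ⟨i + 1, h⟩ < σ ⟨i, Nat.lt_of_succ_lt h⟩ ∧
    τ = σ * Equiv.swap ⟨i, Nat.lt_of_succ_lt h⟩ ⟨i + 1, h⟩

/-- The right weak order on `S_n`: reflexive-transitive closure of the covering relations. -/
def weakLe {n : ℕ} (τ σ : Equiv.Perm (Fin n)) : Prop :=
  Relation.ReflTransGen (fun a b => wCov a b) σ τ

theorem Equiv.Perm.apply_inv_self {α : Type*} (f : Equiv.Perm α) (x : α) : f (f⁻¹ x) = x :=
  f.apply_symm_apply x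

theorem Equiv.Perm.inv_apply_self {α : Type*} (f : Equiv.Perm α) (x : α) : f⁻¹ (f x) = x :=
  f.symm_apply_apply x

namespace Thm10Aux

open Equiv Finset

variable {n : ℕ}

/-- The (value) inversion set of a permutation. -/
def invF (w : Perm (Fin n)) : Finset (Fin n × Fin n) :=
  Finset.univ.filter fun p => p.1 < p.2 ∧ w⁻¹ p.2 < w⁻¹ p.1

lemma mem_invF {w : Perm (Fin n)} {p : Fin n × Fin n} :
    p ∈ invF w ↔ p.1 < p.2 ∧ w⁻¹ p.2 < w⁻¹ p.1 := by simp [invF]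

lemma mem_invF_mk {w : Perm (Fin n)} {a b : Fin n} :
    (a, b) ∈ invF w ↔ a < b ∧ w⁻¹ b < w⁻¹ a := mem_invF

lemma invF_one : invF (1 : Perm (Fin n)) = ∅ := by
  ext p; simp only [mem_invF, Finset.notMem_empty, iff_false]
  rintro ⟨h1, h2⟩
  simp only [inv_one, Perm.one_apply] at h2
  exact absurd h1 (not_lt.2 h2.le)

lemma eq_of_invF_eq {u w : Perm (Fin n)} (h : invF u = invF w) : u = w := by
  have hpos : ∀ v : Fin n, u⁻¹ v = w⁻¹ v := by
    intro v
    have hfil : (Finset.univ.filter fun a => u⁻¹ a < u⁻¹ v)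
        = (Finset.univ.filter fun a => w⁻¹ a < w⁻¹ v) := by
      ext a
      simp only [mem_filter, mem_univ, true_and]
      rcases lt_trichotomy a v with hav | rfl | hva
      · have h1 : (a, v) ∈ invF u ↔ (a, v) ∈ invF w := by rw [h]
        simp only [mem_invF, hav, true_and] at h1
        have hu : u⁻¹ a ≠ u⁻¹ v := fun hh => hav.ne (u⁻¹.injective hh)
        have hw : w⁻¹ a ≠ w⁻¹ v := fun hh => hav.ne (w⁻¹.injective hh)
        rw [Fin.lt_def] at h1 ⊢
        rw [Fin.lt_def]
        have hu' : ((u⁻¹ a : Fin n) : ℕ) ≠ ((u⁻¹ v : Fin n) : ℕ) := fun hh => hu (Fin.ext hh)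
        have hw' : ((w⁻¹ a : Fin n) : ℕ) ≠ ((w⁻¹ v : Fin n) : ℕ) := fun hh => hw (Fin.ext hh)
        omega
      · simp
      · have h1 : (v, a) ∈ invF u ↔ (v, a) ∈ invF w := by rw [h]
        simp only [mem_invF, hva, true_and] at h1
        exact h1
    have hcard : ∀ (x : Perm (Fin n)) (v : Fin n),
        ((x⁻¹ v : Fin n) : ℕ) = (Finset.univ.filter fun a => x⁻¹ a < x⁻¹ v).card := by
      intro x v
      rw [← Fin.card_Iio (x⁻¹ v)]
      refine (Finset.card_bij (fun a _ => x⁻¹ a) ?_ ?_ ?_).symm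
      · intro a ha; simpa using (Finset.mem_filter.1 ha).2
      · intro a _ b _ hab; exact x⁻¹.injective hab
      · intro b hb
        refine ⟨x b, ?_, by simp⟩
        simp only [mem_filter, mem_univ, true_and, Perm.inv_apply_self]
        simpa using hb
    have : ((u⁻¹ v : Fin n) : ℕ) = ((w⁻¹ v : Fin n) : ℕ) := by
      rw [hcard u v, hcard w v, hfil]
    exact Fin.ext this
  have hinv : u⁻¹ = w⁻¹ := Equiv.ext hpos
  have := congrArg (·⁻¹) hinv
  simpa using this

/-- value formula for an adjacent swap -/
lemma swap_val (h : i + 1 < n) (a : Fin n) :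
    ((Equiv.swap ⟨i, Nat.lt_of_succ_lt h⟩ ⟨i + 1, h⟩ a : Fin n) : ℕ)
      = if (a : ℕ) = i then i + 1 else if (a : ℕ) = i + 1 then i else a := by
  rcases eq_or_ne a ⟨i, Nat.lt_of_succ_lt h⟩ with rfl | h1
  · simp [Equiv.swap_apply_left]
  · rcases eq_or_ne a ⟨i + 1, h⟩ with rfl | h2
    · have : ¬ ((i : ℕ) + 1 = i) := by omega
      simp [Equiv.swap_apply_right, this]
    · rw [Equiv.swap_apply_of_ne_of_ne h1 h2]
      have e1 : (a : ℕ) ≠ i := fun hh => h1 (Fin.ext hh)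
      have e2 : (a : ℕ) ≠ i + 1 := fun hh => h2 (Fin.ext hh)
      simp [e1, e2]

lemma swaplt (i α β : ℕ) (h1 : ¬(α = i ∧ β = i + 1)) (h2 : ¬(α = i + 1 ∧ β = i)) :
    ((if β = i then i + 1 else if β = i + 1 then i else β)
      < (if α = i then i + 1 else if α = i + 1 then i else α)) ↔ β < α := by
  split_ifs <;> omega

lemma invF_mul_swap (w : Perm (Fin n)) (h : i + 1 < n)
    (hd : w ⟨i + 1, h⟩ < w ⟨i, Nat.lt_of_succ_lt h⟩) :
    invF (w * Equiv.swap ⟨i, Nat.lt_of_succ_lt h⟩ ⟨i + 1, h⟩)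
      = invF w \ {(w ⟨i + 1, h⟩, w ⟨i, Nat.lt_of_succ_lt h⟩)} := by
  set ia : Fin n := ⟨i, Nat.lt_of_succ_lt h⟩ with hia
  set ib : Fin n := ⟨i + 1, h⟩ with hib
  have hinv : (w * Equiv.swap ia ib)⁻¹ = (Equiv.swap ia ib) * w⁻¹ := by
    rw [mul_inv_rev, Equiv.swap_inv]
  ext ⟨u, v⟩
  simp only [mem_invF, Finset.mem_sdiff, Finset.mem_singleton, Prod.mk.injEq, hinv,
    Perm.mul_apply]
  constructor
  · rintro ⟨huv, hs⟩
    have hAB : ¬((w⁻¹ u = ib ∧ w⁻¹ v = ia) ∨ (w⁻¹ u = ia ∧ w⁻¹ v = ib)) := by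
      rintro (⟨hA, hB⟩ | ⟨hA, hB⟩)
      · rw [hA, hB, Equiv.swap_apply_left, Equiv.swap_apply_right] at hs
        rw [Fin.lt_def] at hs
        simp only [hia, hib] at hs
        omega
      · have hu : u = w ia := by rw [← hA, Perm.apply_inv_self]
        have hv : v = w ib := by rw [← hB, Perm.apply_inv_self]
        rw [hu, hv] at huv
        exact absurd hd (not_lt.2 huv.le)
    push_neg at hAB
    rw [Fin.lt_def] at hs
    rw [swap_val h, swap_val h] at hs
    have h2' : ¬(((w⁻¹ u : Fin n) : ℕ) = i + 1 ∧ ((w⁻¹ v : Fin n) : ℕ) = i) := by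
      rintro ⟨e1, e2⟩
      exact (hAB.1 (Fin.ext e1) (Fin.ext e2)).elim
    have h1' : ¬(((w⁻¹ u : Fin n) : ℕ) = i ∧ ((w⁻¹ v : Fin n) : ℕ) = i + 1) := by
      rintro ⟨e1, e2⟩
      exact (hAB.2 (Fin.ext e1) (Fin.ext e2)).elim
    have hlt : ((w⁻¹ v : Fin n) : ℕ) < ((w⁻¹ u : Fin n) : ℕ) :=
      (swaplt i _ _ h1' h2').1 hs
    refine ⟨⟨huv, hlt⟩, ?_⟩
    rintro ⟨rfl, rfl⟩
    simp only [Perm.inv_apply_self] at h2'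
    exact h2' ⟨by simp [hib], by simp [hia]⟩
  · rintro ⟨⟨huv, hlt⟩, hne⟩
    refine ⟨huv, ?_⟩
    rw [Fin.lt_def, swap_val h, swap_val h]
    have h2' : ¬(((w⁻¹ u : Fin n) : ℕ) = i + 1 ∧ ((w⁻¹ v : Fin n) : ℕ) = i) := by
      rintro ⟨e1, e2⟩
      have hu : u = w ib := by rw [← Perm.apply_inv_self w u]; congr 1; exact Fin.ext e1
      have hv : v = w ia := by rw [← Perm.apply_inv_self w v]; congr 1; exact Fin.ext e2
      exact hne ⟨hu, hv⟩
    have h1' : ¬(((w⁻¹ u : Fin n) : ℕ) = i ∧ ((w⁻¹ v : Fin n) : ℕ) = i + 1) := by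
      rintro ⟨e1, e2⟩
      rw [Fin.lt_def, e1, e2] at hlt
      omega
    exact (swaplt i _ _ h1' h2').2 (by rw [Fin.lt_def] at hlt; exact hlt)

lemma pair_mem_invF (w : Perm (Fin n)) (h : i + 1 < n)
    (hd : w ⟨i + 1, h⟩ < w ⟨i, Nat.lt_of_succ_lt h⟩) :
    (w ⟨i + 1, h⟩, w ⟨i, Nat.lt_of_succ_lt h⟩) ∈ invF w := by
  rw [mem_invF]
  refine ⟨hd, ?_⟩
  simp only [Perm.inv_apply_self]
  rw [Fin.lt_def]
  simp


section WeakOrder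

lemma wCov_ssubset {x τ : Equiv.Perm (Fin n)} (h : wCov x τ) : invF τ ⊂ invF x := by
  obtain ⟨i, hi, hd, rfl⟩ := h
  rw [invF_mul_swap x hi hd]
  exact Finset.sdiff_ssubset (Finset.singleton_subset_iff.2 (pair_mem_invF x hi hd))
    (Finset.singleton_nonempty _)

lemma wCov_ne {x τ : Equiv.Perm (Fin n)} (h : wCov x τ) : τ ≠ x := by
  intro he
  exact (wCov_ssubset h).ne (by rw [he])

lemma invF_subset_of_le {u w : Equiv.Perm (Fin n)} (h : weakLe u w) : invF u ⊆ invF w := by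
  induction h with
  | refl => exact Finset.Subset.refl _
  | tail _ hbc ih => exact ((wCov_ssubset hbc).subset).trans ih

lemma invF_subset_of_descents {x u : Equiv.Perm (Fin n)} (hsub : invF u ⊆ invF x)
    (hdesc : ∀ (i : ℕ) (h : i + 1 < n), x ⟨i+1, h⟩ < x ⟨i, Nat.lt_of_succ_lt h⟩ →
      (x ⟨i+1, h⟩, x ⟨i, Nat.lt_of_succ_lt h⟩) ∈ invF u) :
    invF x ⊆ invF u := by
  suffices H : ∀ (g : ℕ) (a b : Fin n), (a, b) ∈ invF x →
      ((x⁻¹ a : Fin n) : ℕ) - ((x⁻¹ b : Fin n) : ℕ) ≤ g → (a, b) ∈ invF u by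
    intro p hp
    obtain ⟨a, b⟩ := p
    exact H _ a b hp le_rfl
  intro g
  induction g with
  | zero =>
    intro a b hab hg
    have h2 := (mem_invF_mk.1 hab).2
    rw [Fin.lt_def] at h2
    omega
  | succ g ih =>
    intro a b hab hg
    obtain ⟨hab1, hab2⟩ := mem_invF_mk.1 hab
    rw [Fin.lt_def] at hab2
    by_cases hgap : ((x⁻¹ a : Fin n) : ℕ) = ((x⁻¹ b : Fin n) : ℕ) + 1
    · have hI1 : ((x⁻¹ b : Fin n) : ℕ) + 1 < n := hgap ▸ (x⁻¹ a).isLt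
      have hxi : x ⟨((x⁻¹ b : Fin n) : ℕ), Nat.lt_of_succ_lt hI1⟩ = b := by
        have he : (⟨((x⁻¹ b : Fin n) : ℕ), Nat.lt_of_succ_lt hI1⟩ : Fin n) = x⁻¹ b :=
          Fin.ext rfl
        rw [he, Equiv.Perm.apply_inv_self]
      have hxj : x ⟨((x⁻¹ b : Fin n) : ℕ) + 1, hI1⟩ = a := by
        have he : (⟨((x⁻¹ b : Fin n) : ℕ) + 1, hI1⟩ : Fin n) = x⁻¹ a := Fin.ext hgap.symm
        rw [he, Equiv.Perm.apply_inv_self]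
      have := hdesc ((x⁻¹ b : Fin n) : ℕ) hI1 (by rw [hxi, hxj]; exact hab1)
      rw [hxi, hxj] at this
      exact this
    · have hK : ((x⁻¹ b : Fin n) : ℕ) + 1 < n :=
        lt_of_le_of_lt (by omega) (x⁻¹ a).isLt
      set c := x ⟨((x⁻¹ b : Fin n) : ℕ) + 1, hK⟩ with hc
      have hkpos : ((x⁻¹ c : Fin n) : ℕ) = ((x⁻¹ b : Fin n) : ℕ) + 1 := by
        rw [hc, Equiv.Perm.inv_apply_self]
      have hca : c ≠ a := by
        intro he; rw [he] at hkpos; omega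
      have hcb : c ≠ b := by
        intro he; rw [he] at hkpos; omega
      have hg1 : 1 ≤ g := by omega
      have m1 : c < b → (c, b) ∈ invF u := by
        intro hlt
        apply ih
        · exact mem_invF_mk.2 ⟨hlt, by rw [Fin.lt_def]; omega⟩
        · omega
      have m2 : a < c → (a, c) ∈ invF u := by
        intro hlt
        apply ih
        · exact mem_invF_mk.2 ⟨hlt, by rw [Fin.lt_def]; omega⟩
        · omega
      rcases lt_trichotomy c a with h1 | h1 | h1
      · -- c < a < b
        have hm1 := m1 (h1.trans hab1)
        have hna : (c, a) ∉ invF x := by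
          rw [mem_invF_mk]
          rintro ⟨-, hlt⟩
          rw [Fin.lt_def] at hlt
          omega
        have hnu : (c, a) ∉ invF u := fun hh => hna (hsub hh)
        have h3 : u⁻¹ c < u⁻¹ a := by
          rcases lt_trichotomy (u⁻¹ c) (u⁻¹ a) with hh | hh | hh
          · exact hh
          · exact absurd (u⁻¹.injective hh) hca
          · exact absurd (mem_invF_mk.2 ⟨h1, hh⟩) hnu
        exact mem_invF_mk.2 ⟨hab1, ((mem_invF_mk.1 hm1).2).trans h3⟩
      · exact absurd h1 hca
      · rcases lt_trichotomy c b with h2 | h2 | h2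
        · -- a < c < b
          have hm1 := m1 h2
          have hm2 := m2 h1
          exact mem_invF_mk.2 ⟨hab1, ((mem_invF_mk.1 hm1).2).trans (mem_invF_mk.1 hm2).2⟩
        · exact absurd h2 hcb
        · -- a < b < c
          have hm2 := m2 (hab1.trans h2)
          have hnb : (b, c) ∉ invF x := by
            rw [mem_invF_mk]
            rintro ⟨-, hlt⟩
            rw [Fin.lt_def] at hlt
            omega
          have hnu : (b, c) ∉ invF u := fun hh => hnb (hsub hh)
          have h3 : u⁻¹ b ≤ u⁻¹ c := by
            by_contra hh
            exact hnu (mem_invF_mk.2 ⟨h2, not_le.1 hh⟩)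
          exact mem_invF_mk.2 ⟨hab1, lt_of_le_of_lt h3 (mem_invF_mk.1 hm2).2⟩

lemma le_of_card_aux :
    ∀ (N : ℕ) (x u : Equiv.Perm (Fin n)), (invF x).card ≤ N → invF u ⊆ invF x → weakLe u x := by
  intro N
  induction N with
  | zero =>
    intro x u hc hsub
    have hx : invF x = ∅ := Finset.card_eq_zero.1 (le_antisymm hc (Nat.zero_le _))
    have hu : invF u = ∅ := Finset.subset_empty.1 (hx ▸ hsub)
    have heq : u = x := eq_of_invF_eq (hu.trans hx.symm)
    rw [heq]
    exact Relation.ReflTransGen.refl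
  | succ N ih =>
    intro x u hc hsub
    by_cases he : u = x
    · rw [he]
      exact Relation.ReflTransGen.refl
    · by_cases hall : ∀ (i : ℕ) (h : i + 1 < n), x ⟨i+1, h⟩ < x ⟨i, Nat.lt_of_succ_lt h⟩ →
          (x ⟨i+1, h⟩, x ⟨i, Nat.lt_of_succ_lt h⟩) ∈ invF u
      · exact absurd
          (eq_of_invF_eq (Finset.Subset.antisymm hsub (invF_subset_of_descents hsub hall))) he
      · push_neg at hall
        obtain ⟨i, h, hd, hpair⟩ := hall
        have hswap := invF_mul_swap x h hd
        have hsub' : invF u ⊆ invF (x * Equiv.swap ⟨i, Nat.lt_of_succ_lt h⟩ ⟨i+1, h⟩) := by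
          intro q hq
          rw [hswap, Finset.mem_sdiff, Finset.mem_singleton]
          exact ⟨hsub hq, fun hqe => hpair (hqe ▸ hq)⟩
        have hcard' : (invF (x * Equiv.swap ⟨i, Nat.lt_of_succ_lt h⟩ ⟨i+1, h⟩)).card ≤ N := by
          rw [hswap, Finset.card_sdiff_of_subset (Finset.singleton_subset_iff.2 (pair_mem_invF x h hd))]
          simp only [Finset.card_singleton]
          omega
        exact Relation.ReflTransGen.head ⟨i, h, hd, rfl⟩ (ih _ u hcard' hsub')

lemma weakLe_iff {u x : Equiv.Perm (Fin n)} : weakLe u x ↔ invF u ⊆ invF x :=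
  ⟨invF_subset_of_le, fun h => le_of_card_aux _ x u le_rfl h⟩

lemma weakLe_antisymm {u x : Equiv.Perm (Fin n)} (h1 : weakLe u x) (h2 : weakLe x u) : u = x :=
  eq_of_invF_eq (Finset.Subset.antisymm (weakLe_iff.1 h1) (weakLe_iff.1 h2))

lemma exists_descent {x : Equiv.Perm (Fin n)} (hx : x ≠ 1) :
    ∃ (i : ℕ) (h : i + 1 < n), x ⟨i+1, h⟩ < x ⟨i, Nat.lt_of_succ_lt h⟩ := by
  by_contra hno
  push_neg at hno
  have h1 : invF x ⊆ invF (1 : Equiv.Perm (Fin n)) := by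
    apply invF_subset_of_descents
    · rw [invF_one]; exact Finset.empty_subset _
    · intro i h hd
      exact absurd hd (not_lt.2 (hno i h))
  rw [invF_one, Finset.subset_empty] at h1
  exact hx (eq_of_invF_eq (by rw [h1, invF_one]))

lemma mem_covFinset {x τ : Equiv.Perm (Fin n)} :
    τ ∈ Ungarian.covFinset weakLe x ↔ wCov x τ := by
  rw [Ungarian.covFinset, Finset.mem_filter]
  simp only [Finset.mem_univ, true_and, Ungarian.CovRel]
  constructor
  · rintro ⟨hle, hne, hmin⟩
    rcases Relation.ReflTransGen.cases_head hle with heq | ⟨b, hxb, hbτ⟩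
    · exact absurd heq.symm hne
    · rcases hmin b hbτ (Relation.ReflTransGen.single hxb) with rfl | rfl
      · exact hxb
      · exact absurd rfl (wCov_ne hxb)
  · intro hc
    refine ⟨Relation.ReflTransGen.single hc, wCov_ne hc, ?_⟩
    intro w hτw hwx
    obtain ⟨i, h, hd, rfl⟩ := hc
    have hswap := invF_mul_swap x h hd
    have hw1 : invF (x * Equiv.swap ⟨i, Nat.lt_of_succ_lt h⟩ ⟨i+1, h⟩) ⊆ invF w :=
      weakLe_iff.1 hτw
    have hw2 : invF w ⊆ invF x := weakLe_iff.1 hwx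
    by_cases hpw : (x ⟨i+1, h⟩, x ⟨i, Nat.lt_of_succ_lt h⟩) ∈ invF w
    · right
      apply eq_of_invF_eq
      apply Finset.Subset.antisymm hw2
      intro q hq
      by_cases hqp : q = (x ⟨i+1, h⟩, x ⟨i, Nat.lt_of_succ_lt h⟩)
      · rw [hqp]; exact hpw
      · exact hw1 (by rw [hswap, Finset.mem_sdiff, Finset.mem_singleton]; exact ⟨hq, hqp⟩)
    · left
      apply eq_of_invF_eq
      apply Finset.Subset.antisymm
      · intro q hq
        rw [hswap, Finset.mem_sdiff, Finset.mem_singleton]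
        exact ⟨hw2 hq, fun hqe => hpw (hqe ▸ hq)⟩
      · exact hw1

end WeakOrder


section Meet

variable (x : Equiv.Perm (Fin n)) (T : Finset (Equiv.Perm (Fin n)))

def dpred (i : ℕ) : Prop :=
  ∃ h : i + 1 < n, x ⟨i+1, h⟩ < x ⟨i, Nat.lt_of_succ_lt h⟩ ∧
    x * Equiv.swap ⟨i, Nat.lt_of_succ_lt h⟩ ⟨i+1, h⟩ ∈ T

lemma dpred_lt {i : ℕ} (h : dpred x T i) : i + 1 < n := h.1

lemma dpred_exists (k : ℕ) : ∃ j, k ≤ j ∧ ¬ dpred x T j :=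
  ⟨max k n, le_max_left _ _, fun hd => by
    have h1 := dpred_lt x T hd
    have h2 := le_max_right k n
    omega⟩

def hiF (k : ℕ) : ℕ := Nat.find (dpred_exists x T k)

lemma le_hiF (k : ℕ) : k ≤ hiF x T k := (Nat.find_spec (dpred_exists x T k)).1

lemma not_dpred_hiF (k : ℕ) : ¬ dpred x T (hiF x T k) := (Nat.find_spec (dpred_exists x T k)).2

lemma dpred_of_lt_hiF {k j : ℕ} (h1 : k ≤ j) (h2 : j < hiF x T k) : dpred x T j := by
  have := Nat.find_min (dpred_exists x T k) h2
  push_neg at this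
  exact this h1

lemma hiF_le {k : ℕ} (hk : k ≤ n - 1) : hiF x T k ≤ n - 1 := by
  apply Nat.find_le
  exact ⟨hk, fun hd => by have := dpred_lt x T hd; omega⟩

lemma hiF_unique {k b : ℕ} (h1 : k ≤ b) (h2 : ¬ dpred x T b)
    (h3 : ∀ j, k ≤ j → j < b → dpred x T j) : hiF x T k = b := by
  have hle : hiF x T k ≤ b := Nat.find_le ⟨h1, h2⟩
  rcases eq_or_lt_of_le hle with he | hlt
  · exact he
  · exact absurd (h3 _ (le_hiF x T k) hlt) (not_dpred_hiF x T k)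

def loF (k : ℕ) : ℕ := Nat.findGreatest (fun a => a = 0 ∨ ¬ dpred x T (a - 1)) k

lemma loF_le (k : ℕ) : loF x T k ≤ k := Nat.findGreatest_le k

lemma loF_spec (k : ℕ) : loF x T k = 0 ∨ ¬ dpred x T (loF x T k - 1) := by
  unfold loF
  exact Nat.findGreatest_spec (P := fun a => a = 0 ∨ ¬ dpred x T (a - 1)) (Nat.zero_le k)
    (Or.inl rfl)

lemma dpred_of_loF_le {k j : ℕ} (h1 : loF x T k ≤ j) (h2 : j < k) : dpred x T j := by
  have hg := Nat.findGreatest_is_greatest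
    (show loF x T k < j + 1 by omega) (show j + 1 ≤ k by omega)
  push_neg at hg
  simpa using hg.2

lemma loF_unique {k a : ℕ} (hP : a = 0 ∨ ¬ dpred x T (a - 1)) (h1 : a ≤ k)
    (h2 : ∀ j, a ≤ j → j < k → dpred x T j) : loF x T k = a := by
  have hge : a ≤ loF x T k := Nat.le_findGreatest h1 hP
  rcases eq_or_lt_of_le hge with he | hlt
  · exact he.symm
  · rcases loF_spec x T k with h0 | hnd
    · omega
    · exact absurd (h2 _ (by omega) (by have := loF_le x T k; omega)) hnd

lemma hiF_eq_of_mem {k j : ℕ} (h1 : loF x T k ≤ j) (h2 : j ≤ hiF x T k) :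
    hiF x T j = hiF x T k := by
  apply hiF_unique
  · exact h2
  · exact not_dpred_hiF x T k
  · intro t ht1 ht2
    rcases lt_or_ge t k with h | h
    · exact dpred_of_loF_le x T (le_trans h1 ht1) h
    · exact dpred_of_lt_hiF x T h ht2

lemma loF_eq_of_mem {k j : ℕ} (h1 : loF x T k ≤ j) (h2 : j ≤ hiF x T k) :
    loF x T j = loF x T k := by
  apply loF_unique
  · exact loF_spec x T k
  · exact h1
  · intro t ht1 ht2
    rcases lt_or_ge t k with h | h
    · exact dpred_of_loF_le x T ht1 h
    · exact dpred_of_lt_hiF x T h (lt_of_lt_of_le ht2 h2)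

lemma dpred_of_mem {k t : ℕ} (h1 : loF x T k ≤ t) (h2 : t < hiF x T k) : dpred x T t := by
  rcases lt_or_ge t k with h | h
  · exact dpred_of_loF_le x T h1 h
  · exact dpred_of_lt_hiF x T h h2

lemma x_dec {k : ℕ} : ∀ (c a b : ℕ), loF x T k ≤ a → a < b → b ≤ hiF x T k →
    b - a ≤ c → ∀ (hb : b < n) (ha : a < n), x ⟨b, hb⟩ < x ⟨a, ha⟩ := by
  intro c
  induction c with
  | zero => intro a b _ h2 _ hfuel _ _; omega
  | succ c ih =>
    intro a b h1 h2 h3 hfuel hb ha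
    have hda : dpred x T a := dpred_of_mem x T h1 (lt_of_lt_of_le h2 h3)
    obtain ⟨hlt, hdesc, -⟩ := hda
    rcases eq_or_lt_of_le (show a + 1 ≤ b by omega) with rfl | hlt2
    · exact hdesc
    · have hstep : x ⟨a + 1, hlt⟩ < x ⟨a, ha⟩ := hdesc
      have hrec := ih (a+1) b (le_trans h1 (by omega)) hlt2 h3 (by omega) hb hlt
      exact hrec.trans hstep

lemma hiF_lt_n {k : ℕ} (hk : k < n) : hiF x T k < n := by
  have := hiF_le x T (show k ≤ n - 1 by omega)
  omega

def rfun (k : Fin n) : Fin n :=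
  ⟨loF x T k + (hiF x T k - (k : ℕ)), by
    have h1 := loF_le x T (k : ℕ)
    have h2 := le_hiF x T (k : ℕ)
    have h3 := hiF_lt_n x T k.isLt
    omega⟩

lemma rfun_val (k : Fin n) : (rfun x T k : ℕ) = loF x T k + (hiF x T k - (k : ℕ)) := rfl

lemma rfun_mem (k : Fin n) :
    loF x T (k : ℕ) ≤ (rfun x T k : ℕ) ∧ (rfun x T k : ℕ) ≤ hiF x T (k : ℕ) := by
  have h1 := loF_le x T (k : ℕ)
  have h2 := le_hiF x T (k : ℕ)
  rw [rfun_val]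
  omega

lemma rfun_invol : Function.Involutive (rfun x T) := by
  intro k
  have h1 := loF_le x T (k : ℕ)
  have h2 := le_hiF x T (k : ℕ)
  have hm := rfun_mem x T k
  have hlo : loF x T ((rfun x T k : Fin n) : ℕ) = loF x T (k : ℕ) :=
    loF_eq_of_mem x T hm.1 hm.2
  have hhi : hiF x T ((rfun x T k : Fin n) : ℕ) = hiF x T (k : ℕ) :=
    hiF_eq_of_mem x T hm.1 hm.2
  apply Fin.ext
  rw [rfun_val, hlo, hhi, rfun_val]
  omega

def rho : Equiv.Perm (Fin n) := Function.Involutive.toPerm _ (rfun_invol x T)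

lemma rho_apply (k : Fin n) : rho x T k = rfun x T k := rfl

lemma rho_inv (k : Fin n) : (rho x T)⁻¹ k = rfun x T k := by
  apply (rho x T).injective
  rw [Equiv.Perm.apply_inv_self, rho_apply]
  exact (rfun_invol x T k).symm

lemma rho_same_class {j k : Fin n} (h1 : (j : ℕ) < (k : ℕ)) (h2 : (k : ℕ) ≤ hiF x T (j : ℕ)) :
    (rho x T k : ℕ) < (rho x T j : ℕ) := by
  have hlo : loF x T (k : ℕ) = loF x T (j : ℕ) :=
    loF_eq_of_mem x T (le_trans (loF_le x T (j : ℕ)) (le_of_lt h1)) h2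
  have hhi : hiF x T (k : ℕ) = hiF x T (j : ℕ) :=
    hiF_eq_of_mem x T (le_trans (loF_le x T (j : ℕ)) (le_of_lt h1)) h2
  rw [rho_apply, rho_apply, rfun_val, rfun_val, hlo, hhi]
  omega

lemma rho_diff_class {j k : Fin n} (h1 : hiF x T (j : ℕ) < (k : ℕ)) :
    (rho x T j : ℕ) < (rho x T k : ℕ) := by
  have h2 : hiF x T (j : ℕ) + 1 ≤ loF x T (k : ℕ) :=
    Nat.le_findGreatest (by omega) (Or.inr (by simpa using not_dpred_hiF x T (j : ℕ)))
  have h3 := (rfun_mem x T j).2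
  have h4 := (rfun_mem x T k).1
  rw [rho_apply, rho_apply]
  omega

lemma invF_mulrho_mem {u v : Fin n} :
    (u, v) ∈ invF (x * rho x T) ↔
      u < v ∧ (rho x T (x⁻¹ v) : ℕ) < (rho x T (x⁻¹ u) : ℕ) := by
  rw [mem_invF_mk, mul_inv_rev]
  simp only [Equiv.Perm.mul_apply]
  rw [rho_inv, rho_inv, ← rho_apply, ← rho_apply]
  simp only [Fin.lt_def]

lemma invF_mulrho_subset : invF (x * rho x T) ⊆ invF x := by
  intro q hq
  obtain ⟨u, v⟩ := q
  rw [invF_mulrho_mem] at hq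
  obtain ⟨huv, hrho⟩ := hq
  rw [mem_invF_mk]
  refine ⟨huv, ?_⟩
  rw [Fin.lt_def]
  by_contra hcon
  push_neg at hcon
  have hne : ((x⁻¹ u : Fin n) : ℕ) ≠ ((x⁻¹ v : Fin n) : ℕ) := by
    intro he
    exact huv.ne (by
      have : x⁻¹ u = x⁻¹ v := Fin.ext he
      have := congrArg x this
      simpa using this)
  have hji : ((x⁻¹ u : Fin n) : ℕ) < ((x⁻¹ v : Fin n) : ℕ) := by omega
  rcases le_or_gt ((x⁻¹ v : Fin n) : ℕ) (hiF x T ((x⁻¹ u : Fin n) : ℕ)) with hsame | hdiff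
  · have hdec := x_dec x T (k := ((x⁻¹ u : Fin n) : ℕ)) n ((x⁻¹ u : Fin n) : ℕ)
      ((x⁻¹ v : Fin n) : ℕ) (loF_le x T _) hji hsame (by omega) (x⁻¹ v).isLt (x⁻¹ u).isLt
    rw [Fin.eta, Fin.eta, Equiv.Perm.apply_inv_self, Equiv.Perm.apply_inv_self] at hdec
    exact absurd hdec (not_lt.2 huv.le)
  · have := rho_diff_class x T hdiff
    omega

lemma pair_not_mem_mulrho {i : ℕ} (hd : dpred x T i) :
    (x ⟨i+1, hd.1⟩, x ⟨i, Nat.lt_of_succ_lt hd.1⟩) ∉ invF (x * rho x T) := by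
  rw [invF_mulrho_mem]
  rintro ⟨-, hrho⟩
  rw [Equiv.Perm.inv_apply_self, Equiv.Perm.inv_apply_self] at hrho
  have hii : i < hiF x T i := by
    rcases eq_or_lt_of_le (le_hiF x T i) with he | h
    · exfalso
      apply not_dpred_hiF x T i
      rw [← he]
      exact hd
    · exact h
  have := rho_same_class x T (j := ⟨i, Nat.lt_of_succ_lt hd.1⟩) (k := ⟨i+1, hd.1⟩)
    (by simp) (by simpa using hii)
  omega

lemma chain_not_mem {z : Equiv.Perm (Fin n)}
    (havoid : ∀ (i : ℕ) (hd : dpred x T i),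
      (x ⟨i+1, hd.1⟩, x ⟨i, Nat.lt_of_succ_lt hd.1⟩) ∉ invF z)
    {k : ℕ} :
    ∀ (c a b : ℕ), loF x T k ≤ a → a ≤ b → b ≤ hiF x T k → b - a ≤ c →
      ∀ (hb : b < n) (ha : a < n), (x ⟨b, hb⟩, x ⟨a, ha⟩) ∉ invF z := by
  intro c
  induction c with
  | zero =>
    intro a b h1 h2 h3 hfuel hb ha
    have hab : a = b := by omega
    subst hab
    rw [mem_invF_mk]
    rintro ⟨hlt, -⟩
    exact absurd rfl hlt.ne
  | succ c ih =>
    intro a b h1 h2 h3 hfuel hb ha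
    rcases eq_or_lt_of_le h2 with rfl | h2'
    · rw [mem_invF_mk]
      rintro ⟨hlt, -⟩
      exact absurd rfl hlt.ne
    · have hda : dpred x T a := dpred_of_mem x T h1 (lt_of_lt_of_le h2' h3)
      have hstep := havoid a hda
      have hIH : (x ⟨b, hb⟩, x ⟨a+1, hda.1⟩) ∉ invF z :=
        ih (a+1) b (le_trans h1 (by omega)) (by omega) h3 (by omega) hb hda.1
      rcases eq_or_lt_of_le (show a + 1 ≤ b by omega) with rfl | hab
      · exact hstep
      · have hv1 : x ⟨b, hb⟩ < x ⟨a+1, hda.1⟩ :=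
          x_dec x T (k := k) n (a+1) b (le_trans h1 (by omega)) hab h3 (by omega) hb hda.1
        have hv2 : x ⟨a+1, hda.1⟩ < x ⟨a, ha⟩ := hda.2.1
        intro hmem
        rw [mem_invF_mk] at hmem
        obtain ⟨-, hpos⟩ := hmem
        have hs : ¬ (z⁻¹ (x ⟨a, ha⟩) < z⁻¹ (x ⟨a+1, hda.1⟩)) :=
          fun hh => hstep (mem_invF_mk.2 ⟨hv2, hh⟩)
        exact hIH (mem_invF_mk.2 ⟨hv1, lt_of_le_of_lt (not_lt.1 hs) hpos⟩)

lemma meet_exists (hT : ∀ τ ∈ T, wCov x τ) :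
    ∃ m, Ungarian.IsMeetOf weakLe (insert x (T : Set (Equiv.Perm (Fin n)))) m := by
  refine ⟨x * rho x T, ?_, ?_⟩
  · rintro s hs
    rcases Set.mem_insert_iff.1 hs with hsx | hsT
    · rw [hsx]
      exact weakLe_iff.2 (invF_mulrho_subset x T)
    · have hsT' : s ∈ T := hsT
      have hτ := hT s hsT'
      obtain ⟨i, h, hd, rfl⟩ := hτ
      have hdp : dpred x T i := ⟨h, hd, hsT'⟩
      apply weakLe_iff.2
      rw [invF_mul_swap x h hd]
      intro q hq
      rw [Finset.mem_sdiff, Finset.mem_singleton]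
      refine ⟨invF_mulrho_subset x T hq, ?_⟩
      rintro rfl
      exact pair_not_mem_mulrho x T hdp hq
  · intro w hw
    apply weakLe_iff.2
    have hwx : invF w ⊆ invF x := weakLe_iff.1 (hw x (Set.mem_insert _ _))
    have havoid : ∀ (i : ℕ) (hd : dpred x T i),
        (x ⟨i+1, hd.1⟩, x ⟨i, Nat.lt_of_succ_lt hd.1⟩) ∉ invF w := by
      intro i hd
      obtain ⟨h, hdesc, hmem⟩ := hd
      have hle := hw _ (Set.mem_insert_of_mem _ (show
        x * Equiv.swap ⟨i, Nat.lt_of_succ_lt h⟩ ⟨i+1, h⟩ ∈ (T : Set (Equiv.Perm (Fin n))) from hmem))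
      have hsubw := weakLe_iff.1 hle
      rw [invF_mul_swap x h hdesc] at hsubw
      intro hq
      have hthis := hsubw hq
      rw [Finset.mem_sdiff, Finset.mem_singleton] at hthis
      exact hthis.2 rfl
    intro q hq
    obtain ⟨u, v⟩ := q
    rw [invF_mulrho_mem]
    have hm := hwx hq
    rw [mem_invF_mk] at hm
    obtain ⟨huv, hpos⟩ := hm
    refine ⟨huv, ?_⟩
    rcases le_or_gt ((x⁻¹ u : Fin n) : ℕ) (hiF x T ((x⁻¹ v : Fin n) : ℕ)) with hsame | hdiff
    · exfalso
      have hposv : ((x⁻¹ v : Fin n) : ℕ) ≤ ((x⁻¹ u : Fin n) : ℕ) := by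
        rw [Fin.lt_def] at hpos
        omega
      have hchain := chain_not_mem x T havoid (k := ((x⁻¹ v : Fin n) : ℕ)) n
        ((x⁻¹ v : Fin n) : ℕ) ((x⁻¹ u : Fin n) : ℕ) (loF_le x T _) hposv hsame (by omega)
        (x⁻¹ u).isLt (x⁻¹ v).isLt
      rw [Fin.eta, Fin.eta, Equiv.Perm.apply_inv_self, Equiv.Perm.apply_inv_self] at hchain
      exact hchain hq
    · exact rho_diff_class x T hdiff

lemma exists_meet (hT : T ⊆ Ungarian.covFinset weakLe x) :
    ∃ m, Ungarian.IsMeetOf weakLe (insert x (T : Set (Equiv.Perm (Fin n)))) m :=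
  meet_exists x T (fun τ hτ => mem_covFinset.1 (hT hτ))

lemma meetOf_le_self (hT : T ⊆ Ungarian.covFinset weakLe x) :
    weakLe (Ungarian.meetOf weakLe x T) x := by
  unfold Ungarian.meetOf
  rw [dif_pos (exists_meet x T hT)]
  exact (exists_meet x T hT).choose_spec.1 x (Set.mem_insert _ _)

lemma meetOf_le_mem (hT : T ⊆ Ungarian.covFinset weakLe x) {τ : Equiv.Perm (Fin n)}
    (hτ : τ ∈ T) : weakLe (Ungarian.meetOf weakLe x T) τ := by
  unfold Ungarian.meetOf
  rw [dif_pos (exists_meet x T hT)]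
  exact (exists_meet x T hT).choose_spec.1 τ
    (Set.mem_insert_of_mem _ (show τ ∈ (T : Set (Equiv.Perm (Fin n))) from hτ))

lemma meetOf_empty (y : Equiv.Perm (Fin n)) :
    Ungarian.meetOf weakLe y (∅ : Finset (Equiv.Perm (Fin n))) = y := by
  have h := exists_meet y ∅ (Finset.empty_subset _)
  unfold Ungarian.meetOf
  rw [dif_pos h]
  have hs := h.choose_spec
  apply weakLe_antisymm
  · exact hs.1 y (Set.mem_insert _ _)
  · apply hs.2
    intro s hsm
    rcases Set.mem_insert_iff.1 hsm with rfl | hf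
    · exact Relation.ReflTransGen.refl
    · simp at hf

end Meet


section Chain

lemma covFinset_one : Ungarian.covFinset weakLe (1 : Equiv.Perm (Fin n)) = ∅ := by
  ext τ
  simp only [Finset.notMem_empty, iff_false]
  intro hmem
  obtain ⟨i, h, hd, -⟩ := mem_covFinset.1 hmem
  simp only [Equiv.Perm.one_apply, Fin.lt_def] at hd
  omega

lemma stepProb_one {p : ℝ} {y : Equiv.Perm (Fin n)} (hy : y ≠ 1) :
    Ungarian.stepProb p weakLe 1 y = 0 := by
  unfold Ungarian.stepProb
  rw [covFinset_one, Finset.powerset_empty, Finset.sum_singleton, meetOf_empty,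
    if_neg (fun h => hy h.symm)]

lemma stepProb_total {p : ℝ} (hp0 : 0 ≤ p) (hp1 : p ≤ 1) (x : Equiv.Perm (Fin n)) :
    ∑ T ∈ (Ungarian.covFinset weakLe x).powerset,
      ENNReal.ofReal (p ^ T.card * (1 - p) ^ ((Ungarian.covFinset weakLe x).card - T.card))
      = 1 := by
  set S := Ungarian.covFinset weakLe x with hS
  rw [← ENNReal.ofReal_sum_of_nonneg (fun T _ => mul_nonneg (pow_nonneg hp0 _)
    (pow_nonneg (by linarith) _))]
  have hsum : ∑ T ∈ S.powerset, p ^ T.card * (1 - p) ^ (S.card - T.card) = 1 := by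
    have hpa := Finset.prod_add (fun _ : Equiv.Perm (Fin n) => p) (fun _ => 1 - p) S
    simp only [Finset.prod_const] at hpa
    have hcg : ∀ T ∈ S.powerset, p ^ T.card * (1 - p) ^ (S.card - T.card)
        = p ^ T.card * (1 - p) ^ (S \ T).card := by
      intro T hT
      rw [Finset.card_sdiff_of_subset (Finset.mem_powerset.1 hT)]
    rw [Finset.sum_congr rfl hcg, ← hpa]
    norm_num
  rw [hsum, ENNReal.ofReal_one]

lemma invF_card_pos {x : Equiv.Perm (Fin n)} (hx : x ≠ 1) : 1 ≤ (invF x).card := by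
  rcases Finset.eq_empty_or_nonempty (invF x) with he | hne
  · exact absurd (eq_of_invF_eq (by rw [he, invF_one])) hx
  · exact Finset.card_pos.2 hne

lemma covFinset_card_pos {x : Equiv.Perm (Fin n)} (hx : x ≠ 1) :
    1 ≤ (Ungarian.covFinset weakLe x).card := by
  obtain ⟨i, h, hd⟩ := exists_descent hx
  exact Finset.card_pos.2 ⟨_, mem_covFinset.2 ⟨i, h, hd, rfl⟩⟩

lemma invF_meet_lt {x : Equiv.Perm (Fin n)} {T : Finset (Equiv.Perm (Fin n))}
    (hT : T ⊆ Ungarian.covFinset weakLe x) (hne : T.Nonempty) :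
    (invF (Ungarian.meetOf weakLe x T)).card + 1 ≤ (invF x).card := by
  obtain ⟨τ, hτ⟩ := hne
  have h1 : invF (Ungarian.meetOf weakLe x T) ⊆ invF τ :=
    weakLe_iff.1 (meetOf_le_mem x T hT hτ)
  have h2 : invF τ ⊂ invF x := wCov_ssubset (mem_covFinset.1 (hT hτ))
  have h3 := Finset.card_le_card h1
  have h4 := Finset.card_lt_card h2
  omega

lemma step_bound {p : ℝ} (hp0 : 0 < p) (hp1 : p ≤ 1) (x : Equiv.Perm (Fin n)) (hx : x ≠ 1) :
    ∑ y : Equiv.Perm (Fin n), Ungarian.stepProb p weakLe x y * 2 ^ (invF y).card ≤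
      ENNReal.ofReal (1 - p / 2) * 2 ^ (invF x).card := by
  classical
  set S := Ungarian.covFinset weakLe x with hS
  set I := (invF x).card with hI
  set q : Finset (Equiv.Perm (Fin n)) → ℝ≥0∞ :=
    fun T => ENNReal.ofReal (p ^ T.card * (1 - p) ^ (S.card - T.card)) with hq
  have hswap : ∑ y : Equiv.Perm (Fin n), Ungarian.stepProb p weakLe x y * 2 ^ (invF y).card
      = ∑ T ∈ S.powerset, q T * 2 ^ (invF (Ungarian.meetOf weakLe x T)).card := by
    unfold Ungarian.stepProb
    rw [← hS]
    simp only [Finset.sum_mul, ite_mul, zero_mul]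
    rw [Finset.sum_comm]
    apply Finset.sum_congr rfl
    intro T _
    rw [Finset.sum_ite_eq Finset.univ (Ungarian.meetOf weakLe x T)
      (fun y => q T * 2 ^ (invF y).card)]
    simp
  have htot : q ∅ + ∑ T ∈ S.powerset.erase ∅, q T = 1 := by
    rw [Finset.add_sum_erase _ _ (Finset.empty_mem_powerset S)]
    exact stepProb_total hp0.le hp1 x
  have hIpos : 1 ≤ I := invF_card_pos hx
  have hcpos : 1 ≤ S.card := covFinset_card_pos hx
  have hq0 : q ∅ ≤ ENNReal.ofReal (1 - p) := by
    rw [hq]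
    simp only [Finset.card_empty, pow_zero, one_mul, Nat.sub_zero]
    apply ENNReal.ofReal_le_ofReal
    calc (1 - p) ^ S.card ≤ (1 - p) ^ 1 :=
          pow_le_pow_of_le_one (by linarith) (by linarith) hcpos
      _ = 1 - p := pow_one _
  have hpowI : (2 : ℝ≥0∞) ^ I = 2 ^ (I - 1) * 2 := by
    have : I = (I - 1) + 1 := by omega
    rw [this, pow_succ]
    congr 1 <;> omega
  rw [hswap, ← Finset.add_sum_erase _ _ (Finset.empty_mem_powerset S), meetOf_empty, ← hI]
  have herase : ∑ T ∈ S.powerset.erase ∅, q T * 2 ^ (invF (Ungarian.meetOf weakLe x T)).card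
      ≤ (∑ T ∈ S.powerset.erase ∅, q T) * 2 ^ (I - 1) := by
    rw [Finset.sum_mul]
    apply Finset.sum_le_sum
    intro T hT
    apply mul_le_mul_right
    apply pow_le_pow_right₀ one_le_two
    have hTS : T ⊆ S := Finset.mem_powerset.1 (Finset.mem_of_mem_erase hT)
    have hTne : T.Nonempty := Finset.nonempty_of_ne_empty (Finset.ne_of_mem_erase hT)
    have := invF_meet_lt hTS hTne
    omega
  calc q ∅ * 2 ^ I + ∑ T ∈ S.powerset.erase ∅, q T * 2 ^ (invF (Ungarian.meetOf weakLe x T)).card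
      ≤ q ∅ * 2 ^ I + (∑ T ∈ S.powerset.erase ∅, q T) * 2 ^ (I - 1) :=
        add_le_add_right herase _
    _ = (q ∅ + (q ∅ + ∑ T ∈ S.powerset.erase ∅, q T)) * 2 ^ (I - 1) := by
        rw [hpowI]; ring
    _ = (q ∅ + 1) * 2 ^ (I - 1) := by rw [htot]
    _ ≤ (ENNReal.ofReal (1 - p) + 1) * 2 ^ (I - 1) := by
        apply mul_le_mul_left
        exact add_le_add_left hq0 _
    _ = ENNReal.ofReal (2 - p) * 2 ^ (I - 1) := by
        rw [← ENNReal.ofReal_one, ← ENNReal.ofReal_add (by linarith) (by norm_num)]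
        congr 1
        ring
    _ = ENNReal.ofReal (1 - p / 2) * 2 ^ I := by
        rw [hpowI]
        have h2p : (2 : ℝ) - p = (1 - p / 2) * 2 := by ring
        rw [h2p, ENNReal.ofReal_mul (by linarith), ENNReal.ofReal_ofNat]
        ring

lemma two_mul_card_le (w : Equiv.Perm (Fin n)) : 2 * (invF w).card ≤ n * n - n := by
  classical
  set A := Finset.univ.filter (fun qq : Fin n × Fin n => qq.1 < qq.2) with hA
  set B := Finset.univ.filter (fun qq : Fin n × Fin n => qq.2 < qq.1) with hB
  have h1 : (invF w).card ≤ A.card := by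
    apply Finset.card_le_card
    intro qq hqq
    rw [hA, Finset.mem_filter]
    exact ⟨Finset.mem_univ _, (mem_invF.1 hqq).1⟩
  have h2 : A.card = B.card := by
    apply Finset.card_bij (fun qq _ => Prod.swap qq)
    · intro qq hqq
      rw [hA, Finset.mem_filter] at hqq
      rw [hB, Finset.mem_filter]
      exact ⟨Finset.mem_univ _, hqq.2⟩
    · intro a _ b _ hab
      exact Prod.swap_injective hab
    · intro b hb
      rw [hB, Finset.mem_filter] at hb
      exact ⟨Prod.swap b, by rw [hA, Finset.mem_filter]; exact ⟨Finset.mem_univ _, hb.2⟩,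
        (Prod.swap_swap b).symm⟩
  have h3 : Disjoint A B := by
    rw [Finset.disjoint_left]
    intro qq hqa hqb
    rw [hA, Finset.mem_filter] at hqa
    rw [hB, Finset.mem_filter] at hqb
    exact absurd hqa.2 (not_lt.2 hqb.2.le)
  have h4 : A ∪ B = (Finset.univ : Finset (Fin n)).offDiag := by
    ext qq
    rw [Finset.mem_union, hA, hB, Finset.mem_filter, Finset.mem_filter, Finset.mem_offDiag]
    constructor
    · rintro (⟨-, h⟩ | ⟨-, h⟩)
      · exact ⟨Finset.mem_univ _, Finset.mem_univ _, h.ne⟩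
      · exact ⟨Finset.mem_univ _, Finset.mem_univ _, h.ne'⟩
    · rintro ⟨-, -, h⟩
      rcases lt_or_gt_of_ne h with hh | hh
      · exact Or.inl ⟨Finset.mem_univ _, hh⟩
      · exact Or.inr ⟨Finset.mem_univ _, hh⟩
  have h5 : ((Finset.univ : Finset (Fin n)).offDiag).card = n * n - n := by
    rw [Finset.offDiag_card]
    simp [Finset.card_univ]
  have h6 := Finset.card_union_of_disjoint h3
  rw [h4, h5] at h6
  omega

lemma real_ineq {p : ℝ} (hp0 : 0 < p) (hp1 : p ≤ 1) {n z I : ℕ}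
    (hn : 2 ≤ n) (hz : (n : ℝ) ^ 2 / p < z) (hI : 2 * (I : ℝ) ≤ (n : ℝ) ^ 2 - n) :
    (2 : ℝ) ^ I * (1 - p / 2) ^ (z - 1) ≤ Real.exp (-((z : ℝ) * p) / 8) := by
  have hzp : (n : ℝ) ^ 2 < z * p := by
    rw [div_lt_iff₀ hp0] at hz
    exact hz
  have hn' : (2 : ℝ) ≤ n := by exact_mod_cast hn
  have hz1 : 1 ≤ z := by
    by_contra h
    have hz0 : z = 0 := by omega
    rw [hz0] at hzp
    push_cast at hzp
    nlinarith
  have hcast : ((z - 1 : ℕ) : ℝ) = (z : ℝ) - 1 := by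
    rw [Nat.cast_sub hz1]
    simp
  have hl2 : Real.log 2 < 0.6931471808 := Real.log_two_lt_d9
  have hl2' : 0 < Real.log 2 := Real.log_pos one_lt_two
  have h2I : (2 : ℝ) ^ I = Real.exp ((I : ℝ) * Real.log 2) := by
    rw [Real.exp_nat_mul, Real.exp_log two_pos]
  have hp2 : (0 : ℝ) ≤ 1 - p / 2 := by linarith
  have hpow : (1 - p / 2) ^ (z - 1) ≤ Real.exp (((z - 1 : ℕ) : ℝ) * (-(p / 2))) := by
    rw [Real.exp_nat_mul]
    apply pow_le_pow_left₀ hp2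
    have := Real.add_one_le_exp (-(p / 2))
    linarith
  have hmain : (I : ℝ) * Real.log 2 + ((z - 1 : ℕ) : ℝ) * (-(p / 2)) ≤ -((z : ℝ) * p) / 8 := by
    rw [hcast]
    have hnn : (0 : ℝ) ≤ (n : ℝ) ^ 2 - n := by nlinarith
    have ha : 8 * ((I : ℝ) * Real.log 2) ≤ 4 * Real.log 2 * ((n : ℝ) ^ 2 - n) := by
      nlinarith
    have hb : 4 * Real.log 2 * ((n : ℝ) ^ 2 - n) ≤ 3 * (n : ℝ) ^ 2 - 4 := by
      nlinarith [sq_nonneg ((n : ℝ) - 2), mul_nonneg (sub_nonneg.2 hn') (sub_nonneg.2 hn')]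
    have hc : 3 * (n : ℝ) ^ 2 - 4 ≤ (3 * (z : ℝ) - 4) * p := by nlinarith
    linarith
  calc (2 : ℝ) ^ I * (1 - p / 2) ^ (z - 1)
      ≤ Real.exp ((I : ℝ) * Real.log 2) * Real.exp (((z - 1 : ℕ) : ℝ) * (-(p / 2))) := by
        rw [h2I]
        exact mul_le_mul_of_nonneg_left hpow (Real.exp_nonneg _)
    _ = Real.exp ((I : ℝ) * Real.log 2 + ((z - 1 : ℕ) : ℝ) * (-(p / 2))) :=
        (Real.exp_add _ _).symm
    _ ≤ Real.exp (-((z : ℝ) * p) / 8) := Real.exp_le_exp.2 hmain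

end Chain

end Thm10Aux

/-- Since the chain absorbs at the identity, for `z ≥ 1` the probability that the hitting
time of the identity is at least `z` equals the probability that the chain is not at the
identity after `z - 1` steps. -/
theorem thm10 (p : ℝ) (hp0 : 0 < p) (hp1 : p ≤ 1) (n : ℕ) (hn : 1 ≤ n)
    (σ : Equiv.Perm (Fin n)) (z : ℕ) (hz : (n : ℝ) ^ 2 / p < z) :
    Ungarian.probIn p (fun a b : Equiv.Perm (Fin n) => weakLe a b) σ (z - 1)
        {τ : Equiv.Perm (Fin n) | τ ≠ 1} ≤
      ENNReal.ofReal (Real.exp (-(z * p) / 8)) := by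
  classical
  show Ungarian.probIn p weakLe σ (z - 1) {τ : Equiv.Perm (Fin n) | τ ≠ 1} ≤
    ENNReal.ofReal (Real.exp (-(z * p) / 8))
  set r : ℝ≥0∞ := ENNReal.ofReal (1 - p / 2) with hr
  set wt : Equiv.Perm (Fin n) → ℝ≥0∞ := fun y => 2 ^ (Thm10Aux.invF y).card with hwt
  set F : Finset (Equiv.Perm (Fin n)) := Finset.univ.filter (fun y => y ≠ 1) with hF
  set Φ : ℕ → ℝ≥0∞ := fun t => ∑ y ∈ F, Ungarian.walk p weakLe σ t y * wt y with hΦ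
  have hwalk0 : ∀ y, Ungarian.walk p weakLe σ 0 y = if y = σ then 1 else 0 := fun _ => by
    simp [Ungarian.walk]
  have hwalkS : ∀ t y, Ungarian.walk p weakLe σ (t + 1) y
      = ∑ zz : Equiv.Perm (Fin n),
          Ungarian.walk p weakLe σ t zz * Ungarian.stepProb p weakLe zz y := fun _ _ => by
    simp only [Ungarian.walk]
  have hprob : ∀ t, Ungarian.probIn p weakLe σ t {τ : Equiv.Perm (Fin n) | τ ≠ 1} ≤ Φ t := by
    intro t
    unfold Ungarian.probIn
    rw [Finset.filter_congr_decidable]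
    have hFeq : Finset.univ.filter (· ∈ {τ : Equiv.Perm (Fin n) | τ ≠ 1}) = F := by
      ext y
      simp [hF]
    rw [hFeq]
    apply Finset.sum_le_sum
    intro y _
    exact le_mul_of_one_le_right' (one_le_pow_of_one_le' one_le_two _)
  have hinner : ∀ zz : Equiv.Perm (Fin n),
      (∑ y ∈ F, Ungarian.stepProb p weakLe zz y * wt y)
        ≤ if zz = 1 then 0 else r * wt zz := by
    intro zz
    by_cases hzz : zz = 1
    · rw [if_pos hzz, hzz]
      apply le_of_eq
      apply Finset.sum_eq_zero
      intro y hy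
      rw [Thm10Aux.stepProb_one (Finset.mem_filter.1 hy).2, zero_mul]
    · rw [if_neg hzz]
      calc ∑ y ∈ F, Ungarian.stepProb p weakLe zz y * wt y
          ≤ ∑ y : Equiv.Perm (Fin n), Ungarian.stepProb p weakLe zz y * wt y :=
            Finset.sum_le_sum_of_subset (Finset.filter_subset _ _)
        _ ≤ r * wt zz := Thm10Aux.step_bound hp0 hp1 zz hzz
  have hstep1 : ∀ t, Φ (t + 1) ≤ r * Φ t := by
    intro t
    have e1 : Φ (t + 1) = ∑ zz : Equiv.Perm (Fin n),
        Ungarian.walk p weakLe σ t zz * (∑ y ∈ F, Ungarian.stepProb p weakLe zz y * wt y) := by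
      simp only [hΦ]
      simp only [hwalkS]
      rw [Finset.sum_congr rfl (fun y _ => Finset.sum_mul _ _ _), Finset.sum_comm]
      apply Finset.sum_congr rfl
      intro zz _
      rw [Finset.mul_sum]
      apply Finset.sum_congr rfl
      intro y _
      ring
    rw [e1]
    calc ∑ zz : Equiv.Perm (Fin n),
        Ungarian.walk p weakLe σ t zz * (∑ y ∈ F, Ungarian.stepProb p weakLe zz y * wt y)
        ≤ ∑ zz : Equiv.Perm (Fin n),
            Ungarian.walk p weakLe σ t zz * (if zz = 1 then 0 else r * wt zz) :=
          Finset.sum_le_sum (fun zz _ => mul_le_mul_right (hinner zz) _)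
      _ = ∑ zz ∈ F, Ungarian.walk p weakLe σ t zz * (r * wt zz) := by
          rw [hF, Finset.sum_filter]
          apply Finset.sum_congr rfl
          intro zz _
          by_cases hzz : zz = 1
          · simp [hzz]
          · simp [hzz]
      _ = r * Φ t := by
          simp only [hΦ]
          rw [Finset.mul_sum]
          apply Finset.sum_congr rfl
          intro y _
          ring
  have hiter : ∀ t, Φ t ≤ r ^ t * Φ 0 := by
    intro t
    induction t with
    | zero => simp
    | succ t ih =>
      calc Φ (t + 1) ≤ r * Φ t := hstep1 t
        _ ≤ r * (r ^ t * Φ 0) := mul_le_mul_right ih r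
        _ = r ^ (t + 1) * Φ 0 := by ring
  by_cases hσ : σ = 1
  · have hΦ00 : Φ 0 = 0 := by
      rw [hΦ]
      apply Finset.sum_eq_zero
      intro y hy
      have hy1 : y ≠ 1 := (Finset.mem_filter.1 hy).2
      have hyσ : y ≠ σ := by rw [hσ]; exact hy1
      rw [hwalk0, if_neg hyσ, zero_mul]
    calc Ungarian.probIn p weakLe σ (z - 1) {τ : Equiv.Perm (Fin n) | τ ≠ 1}
        ≤ Φ (z - 1) := hprob _
      _ ≤ r ^ (z - 1) * Φ 0 := hiter _
      _ = 0 := by rw [hΦ00, mul_zero]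
      _ ≤ _ := zero_le
  · have hn2 : 2 ≤ n := by
      by_contra hcon
      push_neg at hcon
      apply hσ
      ext k
      have h1 := k.isLt
      have h2 := (σ k).isLt
      simp only [Equiv.Perm.one_apply]
      omega
    have hΦ0 : Φ 0 ≤ wt σ := by
      simp only [hΦ]
      have : ∀ y ∈ F, Ungarian.walk p weakLe σ 0 y * wt y = if y = σ then wt y else 0 := by
        intro y _
        rw [hwalk0]
        split_ifs with h
        · rw [one_mul, h]
        · rw [zero_mul]
      rw [Finset.sum_congr rfl this, Finset.sum_ite_eq' F σ wt]
      split_ifs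
      · exact le_rfl
      · exact zero_le
    have hIbound := Thm10Aux.two_mul_card_le σ
    have hnle : n ≤ n * n := Nat.le_mul_of_pos_left n (by omega)
    have hIR : 2 * ((Thm10Aux.invF σ).card : ℝ) ≤ (n : ℝ) ^ 2 - n := by
      have hc : ((2 * (Thm10Aux.invF σ).card : ℕ) : ℝ) ≤ ((n * n - n : ℕ) : ℝ) :=
        Nat.cast_le.2 hIbound
      rw [Nat.cast_sub hnle] at hc
      push_cast at hc
      nlinarith
    have hreal := Thm10Aux.real_ineq hp0 hp1 hn2 hz hIR
    calc Ungarian.probIn p weakLe σ (z - 1) {τ : Equiv.Perm (Fin n) | τ ≠ 1}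
        ≤ Φ (z - 1) := hprob _
      _ ≤ r ^ (z - 1) * Φ 0 := hiter _
      _ ≤ r ^ (z - 1) * wt σ := mul_le_mul_right hΦ0 _
      _ = ENNReal.ofReal ((1 - p / 2) ^ (z - 1) * 2 ^ (Thm10Aux.invF σ).card) := by
          simp only [hr, hwt]
          rw [← ENNReal.ofReal_pow (by linarith : (0:ℝ) ≤ 1 - p / 2) (z - 1)]
          rw [ENNReal.ofReal_mul (pow_nonneg (by linarith : (0:ℝ) ≤ 1 - p / 2) _)]
          congr 1
          rw [ENNReal.ofReal_pow (by norm_num : (0:ℝ) ≤ 2), ENNReal.ofReal_ofNat]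
      _ ≤ ENNReal.ofReal (Real.exp (-(z * p) / 8)) := by
          apply ENNReal.ofReal_le_ofReal
          calc (1 - p / 2) ^ (z - 1) * 2 ^ (Thm10Aux.invF σ).card
              = 2 ^ (Thm10Aux.invF σ).card * (1 - p / 2) ^ (z - 1) := by ring
            _ ≤ Real.exp (-((z : ℝ) * p) / 8) := hreal
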